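/- Assume the MAR condition and the ε-positivity condition. Then the inverse-probability-weighting identity holds: E[ (1−R)·S / (1 − π(X)) ] = E[S] = ψ. -/

import Mathlib

open MeasureTheory ProbabilityTheory

/-- **The inverse-probability-weighting (IPW) identity.**
Under the MAR condition and ε-positivity, `E[(1−R)·S / (1 − π(X))] = E[S] = ψ`,
where `π(X) = E[R | σ(X)]`. -/
theorem ipw_identity
    {Ω 𝒳 : Type*} [MeasurableSpace Ω] [MeasurableSpace 𝒳]
    (P : Measure Ω) [IsProbabilityMeasure P]
    (X : Ω → 𝒳) (hX : Measurable X)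
    (R : Ω → ℝ) (hR : Measurable R) (hR01 : ∀ ω, R ω = 0 ∨ R ω = 1)
    (S : Ω → ℝ) (hSmeas : Measurable S) (hSint : Integrable S P)
    -- the σ-algebra generated by X
    (mX : MeasurableSpace Ω) (hmX : mX = MeasurableSpace.comap X inferInstance)
    -- MAR condition: E[(1−R)·S | mX] = E[1−R | mX] · E[S | mX] a.s.
    (hMAR : P[fun ω => (1 - R ω) * S ω|mX]
      =ᵐ[P] fun ω => (P[fun ω' => 1 - R ω'|mX]) ω * (P[S|mX]) ω)
    -- ε-positivity condition: π(X) = E[R | mX] ≤ 1 − ε a.s.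
    (ε : ℝ) (hε : 0 < ε)
    (hpos : ∀ᵐ ω ∂P, (P[R|mX]) ω ≤ 1 - ε) :
    ∫ ω, (1 - R ω) * S ω / (1 - (P[R|mX]) ω) ∂P = ∫ ω, S ω ∂P := by
  have hm := hmX ▸ hX.comap_le
  set π : Ω → ℝ := P[R|mX] with hπ
  set g : Ω → ℝ := fun ω => (1 - π ω)⁻¹ with hg
  set f : Ω → ℝ := fun ω => (1 - R ω) * S ω with hf
  -- integrability of R
  have hRint : Integrable R P := by
    refine (integrable_const (1 : ℝ)).mono' hR.aestronglyMeasurable ?_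
    refine ae_of_all _ fun ω => ?_
    rcases hR01 ω with h | h <;> simp [h]
  -- integrability of f
  have hfint : Integrable f P := by
    refine hSint.bdd_mul (c := 1)
      ((measurable_const.sub hR).aestronglyMeasurable) ?_
    refine ae_of_all _ fun ω => ?_
    rcases hR01 ω with h | h <;> simp [h]
  -- g is mX-strongly measurable
  have hg_sm : StronglyMeasurable[mX] g :=
    (measurable_const.sub stronglyMeasurable_condExp.measurable).inv.stronglyMeasurable
  -- a.e. bound on g
  have hgb : ∀ᵐ ω ∂P, ε ≤ 1 - π ω := by
    filter_upwards [hpos] with ω hω; linarith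
  have hgbound : ∀ᵐ ω ∂P, ‖g ω‖ ≤ ε⁻¹ := by
    filter_upwards [hgb] with ω hω
    have h0 : 0 < 1 - π ω := lt_of_lt_of_le hε hω
    rw [Real.norm_eq_abs, abs_of_nonneg (inv_nonneg.mpr h0.le)]
    exact inv_anti₀ hε hω
  -- integrability of g * f
  have hgfint : Integrable (g * f) P :=
    hfint.bdd_mul (hg_sm.mono hm).aestronglyMeasurable hgbound
  -- condexp of 1 - R
  have h1R : P[fun ω' => 1 - R ω'|mX] =ᵐ[P] fun ω => 1 - π ω := by
    have := condExp_sub (m := mX) (μ := P) (integrable_const (1 : ℝ)) hRint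
    refine this.trans ?_
    have hc : P[fun _ : Ω => (1 : ℝ)|mX] = fun _ => (1 : ℝ) := condExp_const (μ := P) hm (1:ℝ)
    filter_upwards with ω
    simp [hc, hπ]
  calc ∫ ω, (1 - R ω) * S ω / (1 - π ω) ∂P
      = ∫ ω, (g * f) ω ∂P := by
        refine integral_congr_ae (ae_of_all _ fun ω => ?_)
        simp [g, f, div_eq_inv_mul, mul_comm]
    _ = ∫ ω, (P[g * f|mX]) ω ∂P := (integral_condExp (μ := P) (f := g * f) hm).symm
    _ = ∫ ω, (P[S|mX]) ω ∂P := by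
        refine integral_congr_ae ?_
        have h1 : P[g * f|mX] =ᵐ[P] g * P[f|mX] :=
          condExp_mul_of_stronglyMeasurable_left hg_sm hgfint hfint
        have h2 : P[f|mX] =ᵐ[P] fun ω => (1 - π ω) * (P[S|mX]) ω := by
          refine hMAR.trans ?_
          filter_upwards [h1R] with ω hω
          simp [hω]
        filter_upwards [h1, h2, hgb] with ω hω1 hω2 hω3
        have hne : (1 - π ω) ≠ 0 := (lt_of_lt_of_le hε hω3).ne'
        rw [hω1]
        simp only [Pi.mul_apply, hω2, g]
        field_simp
    _ = ∫ ω, S ω ∂P := integral_condExp (μ := P) (f := S) hm
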